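/- If Σ₁ and Σ₂ are moieties of an infinite set Ω with Σ₁ ∩ Σ₂ a moiety and Σ₁ ∪ Σ₂ = Ω, and U, V ⊆ Sym(Ω) are closed under inverses with Σ₁ full with respect to U and Σ₂ full with respect to V, then Sym(Ω) = (UV)⁴V ∪ (VU)⁴U. -/

import Mathlib

open Pointwise

/-- A moiety of `Ω` is a subset of full cardinality whose complement also has
full cardinality. -/
def IsMoiety {Ω : Type*} (A : Set Ω) : Prop :=
  Cardinal.mk A = Cardinal.mk Ω ∧ Cardinal.mk ↥(Aᶜ) = Cardinal.mk Ω

/-- `A` is full with respect to `U ⊆ Sym(Ω)` if every permutation of `A` is induced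
by an element of `U` stabilizing `A` setwise. -/
def IsFull {Ω : Type*} (U : Set (Equiv.Perm Ω)) (A : Set Ω) : Prop :=
  ∀ σ : Equiv.Perm A, ∃ f ∈ U, f '' A = A ∧ ∀ a : A, f a = (σ a : Ω)

namespace Stmt1Aux

open Set Cardinal Equiv

variable {Ω : Type*}

/-! ### Cardinality helpers -/

lemma card_of_supset {s t : Set Ω} (hsub : s ⊆ t) (hs : Cardinal.mk s = Cardinal.mk Ω) :
    Cardinal.mk t = Cardinal.mk Ω :=
  le_antisymm (Cardinal.mk_set_le t) (hs ▸ Cardinal.mk_le_mk_of_subset hsub)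

noncomputable def ecard {s t : Set Ω} (h : Cardinal.mk s = Cardinal.mk t) : s ≃ t :=
  (Cardinal.eq.mp h).some

lemma preimage_equiv (f : Equiv.Perm Ω) (R : Set Ω) : ⇑f ⁻¹' R = ⇑f.symm '' R := by
  ext z
  simp [Set.mem_image, Equiv.symm_apply_eq]

lemma card_preimage (f : Equiv.Perm Ω) (R : Set Ω) :
    Cardinal.mk ↥(⇑f ⁻¹' R) = Cardinal.mk R := by
  rw [preimage_equiv, Cardinal.mk_image_eq f.symm.injective]

/-- Split a set of full cardinality into a piece of full cardinality whose
relative complement also has full cardinality. -/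
lemma split [Infinite Ω] {s : Set Ω} (hs : Cardinal.mk s = Cardinal.mk Ω) :
    ∃ t, t ⊆ s ∧ Cardinal.mk t = Cardinal.mk Ω ∧ Cardinal.mk ↥(s \ t) = Cardinal.mk Ω := by
  have hinf : ℵ₀ ≤ Cardinal.mk ↥s := by
    rw [hs]; exact Cardinal.infinite_iff.mp ‹Infinite Ω›
  have hsum : Cardinal.mk (↥s ⊕ ↥s) = Cardinal.mk ↥s := by
    rw [Cardinal.mk_sum]
    simp only [Cardinal.lift_id]
    exact Cardinal.add_eq_self hinf
  obtain ⟨f⟩ : Nonempty (↥s ≃ ↥s ⊕ ↥s) := Cardinal.eq.mp hsum.symm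
  have hpre : ∀ R : Set (↥s ⊕ ↥s), ⇑f ⁻¹' R = ⇑f.symm '' R := by
    intro R; ext z; simp [Set.mem_image, Equiv.symm_apply_eq]
  refine ⟨Subtype.val '' (⇑f ⁻¹' (Set.range Sum.inl)), ?_, ?_, ?_⟩
  · rintro x ⟨y, _, rfl⟩; exact y.2
  · rw [Cardinal.mk_image_eq Subtype.val_injective, hpre,
      Cardinal.mk_image_eq f.symm.injective,
      Cardinal.mk_range_eq Sum.inl Sum.inl_injective, hs]
  · have hset : s \ (Subtype.val '' (⇑f ⁻¹' (Set.range Sum.inl)))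
        = Subtype.val '' (⇑f ⁻¹' (Set.range Sum.inr)) := by
      ext x
      constructor
      · rintro ⟨hxs, hxt⟩
        rcases hfx : f ⟨x, hxs⟩ with y | y
        · exact absurd ⟨⟨x, hxs⟩, ⟨y, hfx.symm⟩, rfl⟩ hxt
        · exact ⟨⟨x, hxs⟩, ⟨y, hfx.symm⟩, rfl⟩
      · rintro ⟨⟨x', hx'⟩, ⟨y, hy⟩, rfl⟩
        refine ⟨hx', fun hc => ?_⟩
        obtain ⟨⟨x'', hx''⟩, ⟨y', hy'⟩, hval⟩ := hc
        have hxx : (⟨x'', hx''⟩ : ↥s) = ⟨x', hx'⟩ := Subtype.ext hval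
        rw [hxx] at hy'
        rw [← hy] at hy'
        exact Sum.inl_ne_inr hy'
    rw [hset, Cardinal.mk_image_eq Subtype.val_injective, hpre,
      Cardinal.mk_image_eq f.symm.injective,
      Cardinal.mk_range_eq Sum.inr Sum.inr_injective, hs]

lemma emb_of_card {s t : Set Ω} (h : Cardinal.mk s ≤ Cardinal.mk t) : Nonempty (↥s ↪ ↥t) :=
  Cardinal.le_def _ _ |>.mp h

lemma union_card_or [Infinite Ω] {s t : Set Ω}
    (h : Cardinal.mk ↥(s ∪ t) = Cardinal.mk Ω) :
    Cardinal.mk s = Cardinal.mk Ω ∨ Cardinal.mk t = Cardinal.mk Ω := by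
  by_contra hc
  push_neg at hc
  have hs : Cardinal.mk s < Cardinal.mk Ω := lt_of_le_of_ne (Cardinal.mk_set_le s) hc.1
  have ht : Cardinal.mk t < Cardinal.mk Ω := lt_of_le_of_ne (Cardinal.mk_set_le t) hc.2
  have hlt : Cardinal.mk s + Cardinal.mk t < Cardinal.mk Ω :=
    Cardinal.add_lt_of_lt (Cardinal.infinite_iff.mp ‹Infinite Ω›) hs ht
  have h2 : Cardinal.mk ↥(s ∪ t) < Cardinal.mk Ω := (Cardinal.mk_union_le s t).trans_lt hlt
  rw [h] at h2
  exact absurd h2 (lt_irrefl _)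

/-! ### Gluing permutations from pieces -/

lemma glue3 {s₁ s₂ t₁ t₂ : Set Ω} (hs : Disjoint s₁ s₂) (ht : Disjoint t₁ t₂)
    (e₁ : ↥s₁ ≃ ↥t₁) (e₂ : ↥s₂ ≃ ↥t₂) (e₃ : ↥((s₁ ∪ s₂)ᶜ) ≃ ↥((t₁ ∪ t₂)ᶜ)) :
    ∃ π : Equiv.Perm Ω, (∀ x (hx : x ∈ s₁), π x = e₁ ⟨x, hx⟩) ∧
      (∀ x (hx : x ∈ s₂), π x = e₂ ⟨x, hx⟩) ∧
      (∀ x (hx : x ∈ (s₁ ∪ s₂)ᶜ), π x = e₃ ⟨x, hx⟩) := by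
  classical
  set F : Ω → Ω := fun x =>
    if h1 : x ∈ s₁ then (e₁ ⟨x, h1⟩ : Ω)
    else if h2 : x ∈ s₂ then (e₂ ⟨x, h2⟩ : Ω)
    else (e₃ ⟨x, by simp [h1, h2]⟩ : Ω) with hF
  set G : Ω → Ω := fun y =>
    if h1 : y ∈ t₁ then (e₁.symm ⟨y, h1⟩ : Ω)
    else if h2 : y ∈ t₂ then (e₂.symm ⟨y, h2⟩ : Ω)
    else (e₃.symm ⟨y, by simp [h1, h2]⟩ : Ω) with hG
  have hGF : ∀ x, G (F x) = x := by
    intro x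
    by_cases h1 : x ∈ s₁
    · have hx1 : F x = ↑(e₁ ⟨x, h1⟩) := by simp only [hF]; rw [dif_pos h1]
      have hm : (↑(e₁ ⟨x, h1⟩) : Ω) ∈ t₁ := (e₁ ⟨x, h1⟩).2
      rw [hx1]
      simp only [hG]
      rw [dif_pos hm, Subtype.coe_eta, Equiv.symm_apply_apply]
    · by_cases h2 : x ∈ s₂
      · have hx1 : F x = ↑(e₂ ⟨x, h2⟩) := by simp only [hF]; rw [dif_neg h1, dif_pos h2]
        have hm2 : (↑(e₂ ⟨x, h2⟩) : Ω) ∈ t₂ := (e₂ ⟨x, h2⟩).2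
        have hm1 : (↑(e₂ ⟨x, h2⟩) : Ω) ∉ t₁ := fun hc => (Set.disjoint_left.mp ht hc) hm2
        rw [hx1]
        simp only [hG]
        rw [dif_neg hm1, dif_pos hm2, Subtype.coe_eta, Equiv.symm_apply_apply]
      · have hcm : x ∈ (s₁ ∪ s₂)ᶜ := by simp [h1, h2]
        have hx1 : F x = ↑(e₃ ⟨x, hcm⟩) := by simp only [hF]; rw [dif_neg h1, dif_neg h2]
        have hm := (e₃ ⟨x, hcm⟩).2
        have hm1 : (↑(e₃ ⟨x, hcm⟩) : Ω) ∉ t₁ := fun hc => hm (Set.mem_union_left _ hc)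
        have hm2 : (↑(e₃ ⟨x, hcm⟩) : Ω) ∉ t₂ := fun hc => hm (Set.mem_union_right _ hc)
        rw [hx1]
        simp only [hG]
        rw [dif_neg hm1, dif_neg hm2, Subtype.coe_eta, Equiv.symm_apply_apply]
  have hFG : ∀ y, F (G y) = y := by
    intro y
    by_cases h1 : y ∈ t₁
    · have hy1 : G y = ↑(e₁.symm ⟨y, h1⟩) := by simp only [hG]; rw [dif_pos h1]
      have hm : (↑(e₁.symm ⟨y, h1⟩) : Ω) ∈ s₁ := (e₁.symm ⟨y, h1⟩).2
      rw [hy1]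
      simp only [hF]
      rw [dif_pos hm, Subtype.coe_eta, Equiv.apply_symm_apply]
    · by_cases h2 : y ∈ t₂
      · have hy1 : G y = ↑(e₂.symm ⟨y, h2⟩) := by simp only [hG]; rw [dif_neg h1, dif_pos h2]
        have hm2 : (↑(e₂.symm ⟨y, h2⟩) : Ω) ∈ s₂ := (e₂.symm ⟨y, h2⟩).2
        have hm1 : (↑(e₂.symm ⟨y, h2⟩) : Ω) ∉ s₁ := fun hc => (Set.disjoint_left.mp hs hc) hm2
        rw [hy1]
        simp only [hF]
        rw [dif_neg hm1, dif_pos hm2, Subtype.coe_eta, Equiv.apply_symm_apply]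
      · have hcm : y ∈ (t₁ ∪ t₂)ᶜ := by simp [h1, h2]
        have hy1 : G y = ↑(e₃.symm ⟨y, hcm⟩) := by simp only [hG]; rw [dif_neg h1, dif_neg h2]
        have hm := (e₃.symm ⟨y, hcm⟩).2
        have hm1 : (↑(e₃.symm ⟨y, hcm⟩) : Ω) ∉ s₁ := fun hc => hm (Set.mem_union_left _ hc)
        have hm2 : (↑(e₃.symm ⟨y, hcm⟩) : Ω) ∉ s₂ := fun hc => hm (Set.mem_union_right _ hc)
        rw [hy1]
        simp only [hF]
        rw [dif_neg hm1, dif_neg hm2, Subtype.coe_eta, Equiv.apply_symm_apply]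
  refine ⟨⟨F, G, hGF, hFG⟩, ?_, ?_, ?_⟩
  · intro x hx
    show F x = _
    simp only [hF]
    rw [dif_pos hx]
  · intro x hx
    have h1 : x ∉ s₁ := fun hc => (Set.disjoint_left.mp hs hc) hx
    show F x = _
    simp only [hF]
    rw [dif_neg h1, dif_pos hx]
  · intro x hx
    have h1 : x ∉ s₁ := fun hc => hx (Set.mem_union_left _ hc)
    have h2 : x ∉ s₂ := fun hc => hx (Set.mem_union_right _ hc)
    show F x = _
    simp only [hF]
    rw [dif_neg h1, dif_neg h2]

lemma image_eq_of_forall {π : Equiv.Perm Ω} {s t : Set Ω} (e : ↥s ≃ ↥t)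
    (h : ∀ x (hx : x ∈ s), π x = e ⟨x, hx⟩) : ⇑π '' s = t := by
  ext y
  constructor
  · rintro ⟨x, hx, rfl⟩
    rw [h x hx]
    exact (e ⟨x, hx⟩).2
  · intro hy
    refine ⟨e.symm ⟨y, hy⟩, (e.symm ⟨y, hy⟩).2, ?_⟩
    rw [h _ (e.symm ⟨y, hy⟩).2, Subtype.coe_eta, Equiv.apply_symm_apply]

/-! ### Support and preservation helpers -/

lemma image_eq_of_fixes {π : Equiv.Perm Ω} {s : Set Ω} (h : ∀ x ∉ s, π x = x) :
    ⇑π '' s = s := by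
  ext y
  constructor
  · rintro ⟨x, hx, rfl⟩
    by_contra hπx
    have h2 : π (π x) = π x := h _ hπx
    have h3 : π x = x := π.injective h2
    exact hπx (by rw [h3]; exact hx)
  · intro hy
    by_cases hsy : π.symm y ∈ s
    · exact ⟨π.symm y, hsy, π.apply_symm_apply y⟩
    · have := h _ hsy
      rw [π.apply_symm_apply] at this
      exact absurd (this ▸ hy) hsy
  
lemma mem_of_image_eq {π : Equiv.Perm Ω} {s : Set Ω} (h : ⇑π '' s = s) {x : Ω}
    (hx : x ∈ s) : π x ∈ s :=
  h ▸ Set.mem_image_of_mem π hx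

lemma image_compl_of_image_eq {π : Equiv.Perm Ω} {s : Set Ω} (h : ⇑π '' s = s) :
    ⇑π '' sᶜ = sᶜ := by
  rw [Set.image_compl_eq π.bijective, h]

lemma image_inv_of_image {π : Equiv.Perm Ω} {s t : Set Ω} (h : ⇑π '' s = t) :
    ⇑π⁻¹ '' t = s := by
  rw [← h, ← Set.image_comp]
  simp [Equiv.Perm.inv_def]

lemma mem_compl_of_image_eq {π : Equiv.Perm Ω} {s : Set Ω} (h : ⇑π '' s = s) {x : Ω}
    (hx : x ∈ sᶜ) : π x ∈ sᶜ :=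
  mem_of_image_eq (image_compl_of_image_eq h) hx

lemma mem_iff_of_image_eq {π : Equiv.Perm Ω} {s : Set Ω} (h : ⇑π '' s = s) (x : Ω) :
    x ∈ s ↔ π x ∈ s := by
  constructor
  · exact fun hx => mem_of_image_eq h hx
  · intro hx
    have h2 := mem_of_image_eq (image_inv_of_image h) hx
    simpa using h2

/-- Obtain an element of `U` inducing a given `A`-preserving permutation on `A`. -/
lemma real {U : Set (Equiv.Perm Ω)} {P : Set Ω} (hfull : IsFull U P) (π : Equiv.Perm Ω)
    (hπ : ⇑π '' P = P) : ∃ u ∈ U, ⇑u '' P = P ∧ ∀ x ∈ P, u x = π x := by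
  obtain ⟨f, hfU, hfP, hfa⟩ := hfull (π.subtypePerm (fun x => (mem_iff_of_image_eq hπ x).symm))
  refine ⟨f, hfU, hfP, fun x hx => ?_⟩
  have := hfa ⟨x, hx⟩
  simpa using this

/-- Map a subset `s` of `P` into a target `t ⊆ P` of full cardinality by a
permutation preserving `P`. -/
lemma mapin [Infinite Ω] {P s t : Set Ω} (hsP : s ⊆ P) (htP : t ⊆ P)
    (ht : Cardinal.mk t = Cardinal.mk Ω) (hPs : Cardinal.mk ↥(P \ s) = Cardinal.mk Ω) :
    ∃ π : Equiv.Perm Ω, ⇑π '' P = P ∧ ⇑π '' s ⊆ t := by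
  obtain ⟨ta, htat, hκta, hκtdiff⟩ := split ht
  obtain ⟨e⟩ : Nonempty (↥s ↪ ↥ta) :=
    emb_of_card ((Cardinal.mk_set_le s).trans_eq hκta.symm)
  set t' : Set Ω := Set.range (fun x : ↥s => ((e x : ↥ta) : Ω)) with ht'
  have hinj : Function.Injective (fun x : ↥s => ((e x : ↥ta) : Ω)) :=
    fun a b hab => e.injective (Subtype.val_injective hab)
  have e₁ : ↥s ≃ ↥t' := Equiv.ofInjective _ hinj
  have ht'ta : t' ⊆ ta := by rintro y ⟨x, rfl⟩; exact (e x).2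
  have ht'P : t' ⊆ P := fun y hy => (htat.trans htP) (ht'ta hy)
  have hd1 : Disjoint s (P \ s) := Set.disjoint_left.mpr (by intro a ha hb; exact hb.2 ha)
  have hd2 : Disjoint t' (P \ t') := Set.disjoint_left.mpr (by intro a ha hb; exact hb.2 ha)
  have hκPt' : Cardinal.mk ↥(P \ t') = Cardinal.mk Ω := by
    refine card_of_supset ?_ hκtdiff
    rintro x ⟨hxt, hxta⟩
    exact ⟨htP hxt, fun hc => hxta (ht'ta hc)⟩
  have e₂ : ↥(P \ s) ≃ ↥(P \ t') := ecard (hPs.trans hκPt'.symm)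
  have e₃ : ↥((s ∪ (P \ s))ᶜ) ≃ ↥((t' ∪ (P \ t'))ᶜ) :=
    Equiv.setCongr (by rw [Set.union_diff_cancel hsP, Set.union_diff_cancel ht'P])
  obtain ⟨π, hπ1, hπ2, hπ3⟩ := glue3 hd1 hd2 e₁ e₂ e₃
  refine ⟨π, ?_, ?_⟩
  · have i1 : ⇑π '' s = t' := image_eq_of_forall e₁ hπ1
    have i2 : ⇑π '' (P \ s) = P \ t' := image_eq_of_forall e₂ hπ2
    calc ⇑π '' P = ⇑π '' (s ∪ (P \ s)) := by rw [Set.union_diff_cancel hsP]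
      _ = ⇑π '' s ∪ ⇑π '' (P \ s) := Set.image_union _ _ _
      _ = t' ∪ (P \ t') := by rw [i1, i2]
      _ = P := Set.union_diff_cancel ht'P
  · rw [image_eq_of_forall e₁ hπ1]
    exact ht'ta.trans htat

/-! ### The commutator lemma -/

lemma conj_commutator {G : Type*} [Group G] {w s jv ju : G}
    (c1 : Commute jv s) (c2 : Commute jv ju) (c3 : Commute ju w) :
    (w * jv) * (s * ju) * (w * jv)⁻¹ * (s * ju)⁻¹ = w * s * w⁻¹ * s⁻¹ := by
  have h2 : ju * jv⁻¹ = jv⁻¹ * ju := (c2.symm.inv_right).eq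
  have h3 : ju * w⁻¹ = w⁻¹ * ju := (c3.inv_right).eq
  have h1 : jv * s = s * jv := c1.eq
  calc (w * jv) * (s * ju) * (w * jv)⁻¹ * (s * ju)⁻¹
      = w * jv * s * (ju * jv⁻¹) * (w⁻¹ * (ju⁻¹ * s⁻¹)) := by
        simp only [mul_inv_rev, mul_assoc]
    _ = w * jv * s * (jv⁻¹ * ju) * (w⁻¹ * (ju⁻¹ * s⁻¹)) := by rw [h2]
    _ = w * ((jv * s) * jv⁻¹) * ((ju * w⁻¹) * (ju⁻¹ * s⁻¹)) := by
        simp only [mul_assoc]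
    _ = w * ((s * jv) * jv⁻¹) * ((w⁻¹ * ju) * (ju⁻¹ * s⁻¹)) := by rw [h1, h3]
    _ = w * s * w⁻¹ * s⁻¹ := by group

/-- Any permutation supported on a subset `D` of `A ∩ B` whose relative complement
in `A ∩ B` has full cardinality is an exact commutator `v * u * v⁻¹ * u⁻¹` with
`v ∈ V`, `u ∈ U`. -/
lemma lemmaM [Infinite Ω] {A B : Set Ω} (hUnion : A ∪ B = Set.univ)
    {U V : Set (Equiv.Perm Ω)} (hfullU : IsFull U A) (hfullV : IsFull V B)
    {m : Equiv.Perm Ω} {D : Set Ω} (hDA : D ⊆ A) (hDB : D ⊆ B)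
    (hsupp : ∀ x ∉ D, m x = x)
    (hcard : Cardinal.mk ↥((A ∩ B) \ D) = Cardinal.mk Ω) :
    ∃ v2 ∈ V, ∃ u2 ∈ U, m = v2 * u2 * v2⁻¹ * u2⁻¹ := by
  have hκ : ℵ₀ ≤ Cardinal.mk Ω := Cardinal.infinite_iff.mp ‹Infinite Ω›
  have hmD : ⇑m '' D = D := image_eq_of_fixes hsupp
  set mD : Equiv.Perm ↥D := m.subtypePerm (fun x => (mem_iff_of_image_eq hmD x).symm) with hmDdef
  -- embed ℤ-many copies of D into (A ∩ B) \ D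
  have hcardle : Cardinal.mk (↥D × ℤ) ≤ Cardinal.mk ↥((A ∩ B) \ D) := by
    rw [hcard, Cardinal.mk_prod, Cardinal.lift_uzero, Cardinal.mk_int, Cardinal.lift_aleph0]
    calc Cardinal.mk ↥D * ℵ₀ ≤ Cardinal.mk Ω * Cardinal.mk Ω :=
          mul_le_mul' (Cardinal.mk_set_le D) hκ
      _ = Cardinal.mk Ω := Cardinal.mul_eq_self hκ
  obtain ⟨emb⟩ : Nonempty (↥D × ℤ ↪ ↥((A ∩ B) \ D)) := Cardinal.le_def _ _ |>.mp hcardle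
  set ι : ↥D × ℤ → Ω := fun p => if p.2 = 0 then (p.1 : Ω) else ((emb p : ↥((A ∩ B) \ D)) : Ω)
    with hιdef
  have hι0 : ∀ δ : ↥D, ι (δ, 0) = δ := by intro δ; simp [hιdef]
  have hιne : ∀ (δ : ↥D) (i : ℤ), i ≠ 0 → ι (δ, i) ∈ (A ∩ B) \ D := by
    intro δ i hi
    simp only [hιdef, if_neg hi]
    exact (emb (δ, i)).2
  have hinj : Function.Injective ι := by
    rintro ⟨δ, i⟩ ⟨δ', i'⟩ hp
    by_cases hi : i = 0 <;> by_cases hi' : i' = 0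
    · subst hi; subst hi'
      rw [hι0, hι0] at hp
      rw [Subtype.val_injective hp]
    · subst hi
      rw [hι0] at hp
      have hmem : ι (δ', i') ∈ D := by rw [← hp]; exact δ.2
      exact absurd hmem (hιne δ' i' hi').2
    · subst hi'
      rw [hι0] at hp
      have hmem : ι (δ, i) ∈ D := by rw [hp]; exact δ'.2
      exact absurd hmem (hιne δ i hi).2
    · simp only [hιdef, if_neg hi, if_neg hi'] at hp
      exact emb.injective (Subtype.val_injective hp)
  set ιE : ↥D × ℤ ↪ Ω := ⟨ι, hinj⟩ with hιE
  have hι0E : ∀ δ : ↥D, ιE (δ, 0) = (δ : Ω) := hι0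
  have hrangeC : ∀ x, x ∈ Set.range ιE → x ∈ A ∩ B := by
    rintro x ⟨⟨δ, i⟩, rfl⟩
    by_cases hi : i = 0
    · subst hi
      rw [hι0E]
      exact ⟨hDA δ.2, hDB δ.2⟩
    · exact (hιne δ i hi).1
  have hDrange : ∀ x ∈ D, x ∈ Set.range ιE := fun x hx => ⟨(⟨x, hx⟩, 0), hι0E ⟨x, hx⟩⟩
  set Pshift : Equiv.Perm (↥D × ℤ) := Equiv.prodCongr (Equiv.refl _) (Equiv.addRight (1 : ℤ))
    with hPshiftdef
  set Pcopy : Equiv.Perm (↥D × ℤ) :=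
    Equiv.prodCongrLeft (fun i : ℤ => if 0 ≤ i then mD else Equiv.refl _) with hPcopydef
  set sP : Equiv.Perm Ω := Pshift.viaEmbedding ιE with hsPdef
  set wP : Equiv.Perm Ω := Pcopy.viaEmbedding ιE with hwPdef
  have hsfix : ∀ x, x ∉ A ∩ B → sP x = x :=
    fun x hx => Pshift.viaEmbedding_apply_of_notMem ιE x (fun hc => hx (hrangeC x hc))
  have hwfix : ∀ x, x ∉ A ∩ B → wP x = x :=
    fun x hx => Pcopy.viaEmbedding_apply_of_notMem ιE x (fun hc => hx (hrangeC x hc))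
  have hsA : ⇑sP '' A = A := image_eq_of_fixes (fun x hx => hsfix x (fun hc => hx hc.1))
  have hwB : ⇑wP '' B = B := image_eq_of_fixes (fun x hx => hwfix x (fun hc => hx hc.2))
  have hsap : ∀ p, sP (ιE p) = ιE (Pshift p) := fun p => Pshift.viaEmbedding_apply ιE p
  have hwap : ∀ p, wP (ιE p) = ιE (Pcopy p) := fun p => Pcopy.viaEmbedding_apply ιE p
  have hPshiftap : ∀ (δ : ↥D) (i : ℤ), Pshift (δ, i) = (δ, i + 1) := by
    intro δ i
    simp [hPshiftdef]
  have hPcopyap : ∀ (δ : ↥D) (i : ℤ), Pcopy (δ, i) = (if 0 ≤ i then mD δ else δ, i) := by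
    intro δ i
    simp only [hPcopydef, Equiv.prodCongrLeft_apply]
    split_ifs <;> rfl
  have hkey : wP * sP = m * sP * wP := by
    apply Equiv.ext
    intro x
    by_cases hx : x ∈ Set.range ιE
    · obtain ⟨⟨δ, i⟩, rfl⟩ := hx
      simp only [Equiv.Perm.mul_apply]
      rw [hsap (δ, i), hPshiftap, hwap (δ, i + 1), hPcopyap,
        hwap (δ, i), hPcopyap, hsap _, hPshiftap]
      rcases eq_or_ne (i + 1) 0 with h0 | h0
      · have hi : i = -1 := by omega
        subst hi
        norm_num
        rw [hι0E, hι0E]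
        simp [hmDdef]
      · have hnot : ιE (if 0 ≤ i then mD δ else δ, i + 1) ∉ D := (hιne _ (i + 1) h0).2
        rw [hsupp _ hnot]
        have hcond : (if 0 ≤ i + 1 then mD δ else δ) = (if 0 ≤ i then mD δ else δ) := by
          split_ifs with h1 h2
          · rfl
          · omega
          · omega
          · rfl
        rw [hcond]
    · have h1 : sP x = x := Pshift.viaEmbedding_apply_of_notMem ιE x hx
      have h2 : wP x = x := Pcopy.viaEmbedding_apply_of_notMem ιE x hx
      have h3 : m x = x := hsupp x (fun hc => hx (hDrange x hc))
      simp [Equiv.Perm.mul_apply, h1, h2, h3]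
  have hcomm : m = wP * sP * wP⁻¹ * sP⁻¹ := by
    rw [hkey]
    group
  obtain ⟨u2, hu2U, hu2A, hu2eq⟩ := real hfullU sP hsA
  obtain ⟨v2, hv2V, hv2B, hv2eq⟩ := real hfullV wP hwB
  set ju : Equiv.Perm Ω := sP⁻¹ * u2 with hjudef
  set jv : Equiv.Perm Ω := wP⁻¹ * v2 with hjvdef
  have hjufix : ∀ x ∈ A, ju x = x := by
    intro x hx
    simp only [hjudef, Equiv.Perm.mul_apply]
    rw [hu2eq x hx]
    exact Equiv.symm_apply_apply sP x
  have hjvfix : ∀ x ∈ B, jv x = x := by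
    intro x hx
    simp only [hjvdef, Equiv.Perm.mul_apply]
    rw [hv2eq x hx]
    exact Equiv.symm_apply_apply wP x
  have hu2dec : u2 = sP * ju := by rw [hjudef]; group
  have hv2dec : v2 = wP * jv := by rw [hjvdef]; group
  have hABall : ∀ x : Ω, x ∈ A ∨ x ∈ B := by
    intro x
    have hx : x ∈ A ∪ B := by rw [hUnion]; trivial
    exact hx
  have c1 : Commute jv sP := by
    apply Equiv.Perm.Disjoint.commute
    intro x
    by_cases hx : x ∈ B
    · exact Or.inl (hjvfix x hx)
    · exact Or.inr (hsfix x (fun hc => hx hc.2))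
  have c2 : Commute jv ju := by
    apply Equiv.Perm.Disjoint.commute
    intro x
    by_cases hx : x ∈ B
    · exact Or.inl (hjvfix x hx)
    · exact Or.inr (hjufix x ((hABall x).resolve_right hx))
  have c3 : Commute ju wP := by
    apply Equiv.Perm.Disjoint.commute
    intro x
    by_cases hx : x ∈ A
    · exact Or.inl (hjufix x hx)
    · exact Or.inr (hwfix x (fun hc => hx hc.1))
  refine ⟨v2, hv2V, u2, hu2U, ?_⟩
  rw [hu2dec, hv2dec, conj_commutator c1 c2 c3]
  exact hcomm

/-! ### The key lemma -/

lemma key [Infinite Ω] {A B : Set Ω} (hA : IsMoiety A) (hB : IsMoiety B)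
    (hABm : IsMoiety (A ∩ B)) (hUnion : A ∪ B = Set.univ)
    {U V : Set (Equiv.Perm Ω)} (hU : U⁻¹ = U) (hV : V⁻¹ = V)
    (hfullU : IsFull U A) (hfullV : IsFull V B) (g : Equiv.Perm Ω)
    (hcase : Cardinal.mk ↥(A ∩ ⇑g ⁻¹' (A ∩ B)) = Cardinal.mk Ω) :
    g ∈ (V * U) ^ 4 * U := by
  have hBcA : Bᶜ ⊆ A := by
    intro x hx
    have hm : x ∈ A ∪ B := by rw [hUnion]; trivial
    exact hm.resolve_right hx
  have hAcB : Aᶜ ⊆ B := by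
    intro x hx
    have hm : x ∈ A ∪ B := by rw [hUnion]; trivial
    exact hm.resolve_left hx
  have hCA : A ∩ B ⊆ A := Set.inter_subset_left
  have hCB : A ∩ B ⊆ B := Set.inter_subset_right
  have hκC : Cardinal.mk ↥(A ∩ B) = Cardinal.mk Ω := hABm.1
  have hκBc : Cardinal.mk ↥(Bᶜ) = Cardinal.mk Ω := hB.2
  -- Step 1 : the moiety Γ inside A with g '' Γ ⊆ A ∩ B
  obtain ⟨Γ, hΓsub, hκΓ, hκΓ'⟩ := split hcase
  have hΓA : Γ ⊆ A := fun x hx => (hΓsub hx).1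
  have hΓpre : Γ ⊆ ⇑g ⁻¹' (A ∩ B) := fun x hx => (hΓsub hx).2
  set Δ : Set Ω := ⇑g '' Γ with hΔdef
  have hΔC : Δ ⊆ A ∩ B := by rintro y ⟨x, hx, rfl⟩; exact hΓpre hx
  have hΔA : Δ ⊆ A := fun y hy => (hΔC hy).1
  have hΔB : Δ ⊆ B := fun y hy => (hΔC hy).2
  have hκΔ : Cardinal.mk ↥Δ = Cardinal.mk Ω := by
    rw [hΔdef, Cardinal.mk_image_eq g.injective]; exact hκΓ
  have hgΓ'sub : ⇑g '' ((A ∩ ⇑g ⁻¹' (A ∩ B)) \ Γ) ⊆ (A ∩ B) \ Δ := by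
    rintro y ⟨x, ⟨hx1, hx2⟩, rfl⟩
    refine ⟨hx1.2, fun hc => ?_⟩
    obtain ⟨x', hx', hxx⟩ := hc
    exact hx2 ((g.injective hxx) ▸ hx')
  have hκCΔ : Cardinal.mk ↥((A ∩ B) \ Δ) = Cardinal.mk Ω :=
    card_of_supset hgΓ'sub (by rw [Cardinal.mk_image_eq g.injective]; exact hκΓ')
  have hκAΓ : Cardinal.mk ↥(A \ Γ) = Cardinal.mk Ω :=
    card_of_supset (fun x hx => ⟨hx.1.1, hx.2⟩) hκΓ'
  have hκAΔ : Cardinal.mk ↥(A \ Δ) = Cardinal.mk Ω :=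
    card_of_supset (fun y hy => ⟨hy.1.1, hy.2⟩) hκCΔ
  -- Step 2 : u5 ∈ U agreeing with g on Γ
  have hd1 : Disjoint Γ (A \ Γ) := Set.disjoint_left.mpr (by intro a ha hb; exact hb.2 ha)
  have hd2 : Disjoint Δ (A \ Δ) := Set.disjoint_left.mpr (by intro a ha hb; exact hb.2 ha)
  set e₁ : ↥Γ ≃ ↥Δ := Equiv.Set.image ⇑g Γ g.injective with he₁
  have e₁ap : ∀ (x : Ω) (hx : x ∈ Γ), (e₁ ⟨x, hx⟩ : Ω) = g x := by
    intro x hx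
    show ((Equiv.Set.image ⇑g Γ g.injective) ⟨x, hx⟩ : Ω) = g x
    rfl
  have e₂ : ↥(A \ Γ) ≃ ↥(A \ Δ) := ecard (hκAΓ.trans hκAΔ.symm)
  have e₃ : ↥((Γ ∪ (A \ Γ))ᶜ) ≃ ↥((Δ ∪ (A \ Δ))ᶜ) :=
    Equiv.setCongr (by rw [Set.union_diff_cancel hΓA, Set.union_diff_cancel hΔA])
  obtain ⟨σ5, hσ51, hσ52, _⟩ := glue3 hd1 hd2 e₁ e₂ e₃
  have hσ5A : ⇑σ5 '' A = A := by
    calc ⇑σ5 '' A = ⇑σ5 '' (Γ ∪ (A \ Γ)) := by rw [Set.union_diff_cancel hΓA]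
      _ = ⇑σ5 '' Γ ∪ ⇑σ5 '' (A \ Γ) := Set.image_union _ _ _
      _ = Δ ∪ (A \ Δ) := by rw [image_eq_of_forall e₁ hσ51, image_eq_of_forall e₂ hσ52]
      _ = A := Set.union_diff_cancel hΔA
  obtain ⟨u5, hu5U, hu5A, hu5eq⟩ := real hfullU σ5 hσ5A
  set h : Equiv.Perm Ω := g * u5⁻¹ with hhdef
  have hfixΔ : ∀ y ∈ Δ, h y = y := by
    rintro y ⟨x, hx, rfl⟩
    have h1 : u5 x = g x := by rw [hu5eq x (hΓA hx), hσ51 x hx, e₁ap x hx]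
    have h2 : u5⁻¹ (g x) = x := by rw [← h1]; exact Equiv.symm_apply_apply u5 x
    show (g * u5⁻¹) (g x) = g x
    simp only [Equiv.Perm.mul_apply]
    rw [h2]
  -- Step 3 : the conjugating word w = vw * uw
  set T : Set Ω := ⇑h ⁻¹' Bᶜ with hTdef
  have hκT : Cardinal.mk ↥T = Cardinal.mk Ω := by
    rw [hTdef, card_preimage]; exact hκBc
  have hTΔ : ∀ x ∈ Δ, x ∉ T := by
    intro x hx hT
    have hmem : h x ∈ Bᶜ := hT
    rw [hfixΔ x hx] at hmem
    exact hmem (hΔB hx)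
  obtain ⟨C2, hC2C, hκC2, hκCC2⟩ := split hκC
  have hC2A : C2 ⊆ A := fun x hx => (hC2C hx).1
  have hC2B : C2 ⊆ B := fun x hx => (hC2C hx).2
  obtain ⟨τw, hτwA, hτwim⟩ := mapin (Set.inter_subset_right : T ∩ A ⊆ A) hC2A hκC2
      (card_of_supset (fun x hx => ⟨hΔA hx, fun hc => hTΔ x hx hc.1⟩) hκΔ)
  obtain ⟨uw, huwU, huwA, huweq⟩ := real hfullU τw hτwA
  have hsw_sub : C2 ∪ Aᶜ ⊆ B := Set.union_subset hC2B hAcB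
  have hκBrest : Cardinal.mk ↥(B \ (C2 ∪ Aᶜ)) = Cardinal.mk Ω := by
    refine card_of_supset ?_ hκCC2
    rintro x ⟨⟨hxA, hxB⟩, hxC2⟩
    exact ⟨hxB, fun hc => hc.elim hxC2 (fun hc2 => hc2 hxA)⟩
  obtain ⟨σw, hσwB, hσwim⟩ := mapin hsw_sub hC2B hκC2 hκBrest
  obtain ⟨vw, hvwV, hvwB, hvweq⟩ := real hfullV σw hσwB
  set w : Equiv.Perm Ω := vw * uw with hwdef
  have hwT : ∀ x ∈ T, w x ∈ C2 := by
    intro x hx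
    have hBmem : uw x ∈ C2 ∪ Aᶜ := by
      by_cases hxA : x ∈ A
      · left
        rw [huweq x hxA]
        exact hτwim (Set.mem_image_of_mem _ ⟨hx, hxA⟩)
      · right
        exact mem_compl_of_image_eq huwA hxA
    show (vw * uw) x ∈ C2
    simp only [Equiv.Perm.mul_apply]
    rw [hvweq _ (hsw_sub hBmem)]
    exact hσwim (Set.mem_image_of_mem _ hBmem)
  set Δ1 : Set Ω := ⇑w '' T with hΔ1def
  have hΔ1C2 : Δ1 ⊆ C2 := by rintro y ⟨x, hx, rfl⟩; exact hwT x hx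
  have hΔ1C : Δ1 ⊆ A ∩ B := fun y hy => hC2C (hΔ1C2 hy)
  have hΔ1A : Δ1 ⊆ A := fun y hy => (hΔ1C hy).1
  have hΔ1B : Δ1 ⊆ B := fun y hy => (hΔ1C hy).2
  have hκΔ1 : Cardinal.mk ↥Δ1 = Cardinal.mk Ω := by
    rw [hΔ1def, Cardinal.mk_image_eq w.injective]; exact hκT
  have hκAΔ1 : Cardinal.mk ↥(A \ Δ1) = Cardinal.mk Ω :=
    card_of_supset (fun x hx => ⟨hx.1.1, fun hc => hx.2 (hΔ1C2 hc)⟩) hκCC2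
  have hκABc : Cardinal.mk ↥(A \ Bᶜ) = Cardinal.mk Ω :=
    card_of_supset (fun x hx => ⟨hx.1, fun hc => hc hx.2⟩) hκC
  -- Step 4 : τ1 carrying Δ1 exactly onto Bᶜ
  have hd3 : Disjoint Δ1 (A \ Δ1) := Set.disjoint_left.mpr (by intro a ha hb; exact hb.2 ha)
  have hd4 : Disjoint Bᶜ (A \ Bᶜ) := Set.disjoint_left.mpr (by intro a ha hb; exact hb.2 ha)
  have f₁ : ↥Δ1 ≃ ↥(Bᶜ) := ecard (hκΔ1.trans hκBc.symm)
  have f₂ : ↥(A \ Δ1) ≃ ↥(A \ Bᶜ) := ecard (hκAΔ1.trans hκABc.symm)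
  have f₃ : ↥((Δ1 ∪ (A \ Δ1))ᶜ) ≃ ↥((Bᶜ ∪ (A \ Bᶜ))ᶜ) :=
    Equiv.setCongr (by rw [Set.union_diff_cancel hΔ1A, Set.union_diff_cancel hBcA])
  obtain ⟨τ1, hτ11, hτ12, _⟩ := glue3 hd3 hd4 f₁ f₂ f₃
  have hτ1A : ⇑τ1 '' A = A := by
    calc ⇑τ1 '' A = ⇑τ1 '' (Δ1 ∪ (A \ Δ1)) := by rw [Set.union_diff_cancel hΔ1A]
      _ = ⇑τ1 '' Δ1 ∪ ⇑τ1 '' (A \ Δ1) := Set.image_union _ _ _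
      _ = Bᶜ ∪ (A \ Bᶜ) := by rw [image_eq_of_forall f₁ hτ11, image_eq_of_forall f₂ hτ12]
      _ = A := Set.union_diff_cancel hBcA
  obtain ⟨u1, hu1U, hu1A, hu1eq⟩ := real hfullU τ1 hτ1A
  have hu1Δ1 : ⇑u1 '' Δ1 = Bᶜ := by
    rw [Set.image_congr (fun a ha => hu1eq a (hΔ1A ha))]
    exact image_eq_of_forall f₁ hτ11
  -- Step 5 : v1 realizing h * w⁻¹ * u1⁻¹ on B
  have hζB : ⇑(h * w⁻¹ * u1⁻¹) '' B = B := by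
    have i1 : ⇑u1⁻¹ '' B = Δ1ᶜ := by
      have i1a : ⇑u1⁻¹ '' Bᶜ = Δ1 := image_inv_of_image hu1Δ1
      calc ⇑u1⁻¹ '' B = ⇑u1⁻¹ '' (Bᶜ)ᶜ := by rw [compl_compl]
        _ = (⇑u1⁻¹ '' Bᶜ)ᶜ := Set.image_compl_eq (u1⁻¹ : Equiv.Perm Ω).bijective
        _ = Δ1ᶜ := by rw [i1a]
    have i2 : ⇑w⁻¹ '' Δ1ᶜ = Tᶜ := by
      have i2a : ⇑w⁻¹ '' Δ1 = T := image_inv_of_image hΔ1def.symm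
      calc ⇑w⁻¹ '' Δ1ᶜ = (⇑w⁻¹ '' Δ1)ᶜ := Set.image_compl_eq (w⁻¹ : Equiv.Perm Ω).bijective
        _ = Tᶜ := by rw [i2a]
    have i3 : ⇑h '' Tᶜ = B := by
      have i3a : ⇑h '' T = Bᶜ := by rw [hTdef]; exact Set.image_preimage_eq _ h.surjective
      calc ⇑h '' Tᶜ = (⇑h '' T)ᶜ := Set.image_compl_eq h.bijective
        _ = B := by rw [i3a, compl_compl]
    calc ⇑(h * w⁻¹ * u1⁻¹) '' B = ⇑h '' (⇑w⁻¹ '' (⇑u1⁻¹ '' B)) := by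
          simp only [Equiv.Perm.coe_mul, Set.image_comp]
      _ = B := by rw [i1, i2, i3]
  obtain ⟨v1, hv1V, hv1B, hv1eq⟩ := real hfullV (h * w⁻¹ * u1⁻¹) hζB
  -- Step 6 : the commutator part
  have hqz : ∀ x ∉ Δ1, (v1 * u1) x = (h * w⁻¹) x := by
    intro x hx
    have hu1B : u1 x ∈ B := by
      by_cases hxA : x ∈ A
      · rw [hu1eq x hxA, hτ12 x ⟨hxA, hx⟩]
        have hmem := (f₂ ⟨x, ⟨hxA, hx⟩⟩).2
        exact Set.not_notMem.mp hmem.2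
      · exact hAcB (mem_compl_of_image_eq hu1A hxA)
    show v1 (u1 x) = (h * w⁻¹) x
    rw [hv1eq _ hu1B]
    simp only [Equiv.Perm.mul_apply, Equiv.Perm.inv_def, Equiv.symm_apply_apply]
  have hmsupp : ∀ x ∉ Δ1, ((v1 * u1)⁻¹ * (h * w⁻¹)) x = x := by
    intro x hx
    show ((v1 * u1)⁻¹) ((h * w⁻¹) x) = x
    rw [← hqz x hx]
    exact Equiv.symm_apply_apply _ _
  obtain ⟨v2, hv2V, u2, hu2U, hm⟩ := lemmaM hUnion hfullU hfullV hΔ1A hΔ1B hmsupp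
      (card_of_supset (fun x hx => ⟨hx.1, fun hc => hx.2 (hΔ1C2 hc)⟩) hκCC2)
  -- Step 7 : assemble
  have key2 : (v1 * u1) * ((v1 * u1)⁻¹ * (h * w⁻¹)) * w * u5 = g := by
    rw [hhdef, hwdef]
    group
  rw [hm, hwdef] at key2
  have key3 : g = (((v1 * u1) * (v2 * u2)) * (v2⁻¹ * u2⁻¹)) * (vw * uw) * u5 := by
    rw [← key2]
    group
  have hv2V' : v2⁻¹ ∈ V := by rw [← hV]; exact Set.inv_mem_inv.mpr hv2V
  have hu2U' : u2⁻¹ ∈ U := by rw [← hU]; exact Set.inv_mem_inv.mpr hu2U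
  have hpow : (V * U) ^ 4 = (V * U) * (V * U) * (V * U) * (V * U) := by
    rw [pow_succ, pow_succ, pow_succ, pow_one]
  rw [key3]
  refine Set.mul_mem_mul ?_ hu5U
  rw [hpow]
  exact Set.mul_mem_mul (Set.mul_mem_mul (Set.mul_mem_mul
    (Set.mul_mem_mul hv1V hu1U) (Set.mul_mem_mul hv2V hu2U))
    (Set.mul_mem_mul hv2V' hu2U')) (Set.mul_mem_mul hvwV huwU)

end Stmt1Aux

theorem stmt1 {Ω : Type*} [Infinite Ω] (A B : Set Ω)
    (hA : IsMoiety A) (hB : IsMoiety B) (hAB : IsMoiety (A ∩ B))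
    (hUnion : A ∪ B = Set.univ)
    (U V : Set (Equiv.Perm Ω)) (hU : U⁻¹ = U) (hV : V⁻¹ = V)
    (hfullU : IsFull U A) (hfullV : IsFull V B) :
    (U * V) ^ 4 * V ∪ (V * U) ^ 4 * U = Set.univ := by
  apply Set.eq_univ_of_forall
  intro g
  have hκpre : Cardinal.mk ↥(⇑g ⁻¹' (A ∩ B)) = Cardinal.mk Ω := by
    rw [Stmt1Aux.card_preimage]
    exact hAB.1
  have hsplit : (A ∩ ⇑g ⁻¹' (A ∩ B)) ∪ (B ∩ ⇑g ⁻¹' (A ∩ B)) = ⇑g ⁻¹' (A ∩ B) := by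
    rw [← Set.union_inter_distrib_right, hUnion, Set.univ_inter]
  have hor := Stmt1Aux.union_card_or (by rw [hsplit]; exact hκpre)
  rcases hor with hA' | hB'
  · exact Set.mem_union_right _ (Stmt1Aux.key hA hB hAB hUnion hU hV hfullU hfullV g hA')
  · apply Set.mem_union_left
    have hBA : IsMoiety (B ∩ A) := by rw [Set.inter_comm]; exact hAB
    have hBA2 : B ∪ A = Set.univ := by rw [Set.union_comm]; exact hUnion
    have hB'' : Cardinal.mk ↥(B ∩ ⇑g ⁻¹' (B ∩ A)) = Cardinal.mk Ω := by
      rw [Set.inter_comm B A]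
      exact hB'
    exact Stmt1Aux.key hB hA hBA hBA2 hV hU hfullV hfullU g hB''
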